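/- Delta of the barrier-pricing parameter ℬ: fix K > 0, B > 0, T > 0, σ > 0, r_d, r_f ∈ ℝ and φ ∈ {1, −1}. Then the function S ↦ ℬ(S) = φ(S e^{-r_f T} N(φx₂(S)) − K e^{-r_d T} N(φ(x₂(S) − σ√T))), where x₂(S) = ln(S/B)/(σ√T) + (1+α)σ√T and α = (r_d − r_f − σ²/2)/σ², is differentiable at every S > 0 with derivative ∂ℬ/∂S = φ · [ (1/2) e^{-r_f T}(erf(φ(2ln(S/B) + T(2r_d − 2r_f + σ²))/(2√2 σ√T)) + 1) − (Kφ/(√(2π) σ S √T)) exp(−(T(−2r_d + 2r_f + σ²) − 2ln(S/B))²/(8σ²T) − r_d T) + (φ/(√(2π) σ √T)) exp(−(2ln(S/B) + T(2r_d − 2r_f + σ²))²/(8σ²T) − r_f T) ]. -/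

import Mathlib

noncomputable def stdNormalCdf (z : ℝ) : ℝ :=
  ∫ x in Set.Iic z, (1 / Real.sqrt (2 * Real.pi)) * Real.exp (-x ^ 2 / 2)

/-- The error function `erf z = (2/√π) ∫_0^z e^{-t²} dt`. -/
noncomputable def erf (z : ℝ) : ℝ :=
  (2 / Real.sqrt Real.pi) * ∫ t in (0:ℝ)..z, Real.exp (-t ^ 2)

open MeasureTheory Real

lemma gauss_integrable : MeasureTheory.Integrable
    (fun x : ℝ => (1 / Real.sqrt (2 * Real.pi)) * Real.exp (-x ^ 2 / 2)) := by
  apply MeasureTheory.Integrable.const_mul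
  have : (fun x : ℝ => Real.exp (-x ^ 2 / 2)) = fun x : ℝ => Real.exp (-(1/2 : ℝ) * x ^ 2) := by
    ext x; ring_nf
  rw [this]
  exact integrable_exp_neg_mul_sq (by norm_num)

lemma gauss_cont : Continuous (fun x : ℝ => (1 / Real.sqrt (2 * Real.pi)) * Real.exp (-x ^ 2 / 2)) := by
  continuity

lemma stdNormalCdf_eq (z : ℝ) : stdNormalCdf z =
    stdNormalCdf 0 + ∫ x in (0:ℝ)..z, (1 / Real.sqrt (2 * Real.pi)) * Real.exp (-x ^ 2 / 2) := by
  have := intervalIntegral.integral_Iic_sub_Iic (μ := volume)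
    (f := fun x : ℝ => (1 / Real.sqrt (2 * Real.pi)) * Real.exp (-x ^ 2 / 2))
    (gauss_integrable.integrableOn) (gauss_integrable.integrableOn) (a := 0) (b := z)
  unfold stdNormalCdf
  linarith [this]

lemma stdNormalCdf_hasDeriv (z : ℝ) :
    HasDerivAt stdNormalCdf (1 / Real.sqrt (2 * Real.pi) * Real.exp (-z ^ 2 / 2)) z := by
  have h : HasDerivAt (fun u : ℝ => stdNormalCdf 0 + ∫ x in (0:ℝ)..u,
      (1 / Real.sqrt (2 * Real.pi)) * Real.exp (-x ^ 2 / 2))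
      (1 / Real.sqrt (2 * Real.pi) * Real.exp (-z ^ 2 / 2)) z := by
    apply HasDerivAt.const_add
    exact intervalIntegral.integral_hasDerivAt_right
      (gauss_integrable.intervalIntegrable)
      (gauss_cont.stronglyMeasurableAtFilter _ _)
      (gauss_cont.continuousAt)
  exact h.congr_of_eventuallyEq (Filter.Eventually.of_forall fun u => (stdNormalCdf_eq u))

lemma stdNormalCdf_zero : stdNormalCdf 0 = 1 / 2 := by
  unfold stdNormalCdf
  rw [MeasureTheory.integral_const_mul]
  have h1 : ∫ x in Set.Iic (0:ℝ), Real.exp (-x ^ 2 / 2)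
      = ∫ x in Set.Ioi (0:ℝ), Real.exp (-x ^ 2 / 2) := by
    rw [← neg_zero, ← integral_comp_neg_Ioi, neg_zero]
    congr 1; funext x; rw [neg_sq]
  have h2 : ∫ x in Set.Ioi (0:ℝ), Real.exp (-x ^ 2 / 2)
      = Real.sqrt (Real.pi / (1/2)) / 2 := by
    rw [← integral_gaussian_Ioi (1/2)]
    congr 1; ext x; ring_nf
  rw [h1, h2, show Real.pi / (1/2) = 2 * Real.pi by ring]
  have h2π : Real.sqrt (2 * Real.pi) ≠ 0 :=
    ne_of_gt (Real.sqrt_pos.mpr (by positivity))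
  field_simp

lemma stdNormalCdf_erf (z : ℝ) : stdNormalCdf z = (erf (z / Real.sqrt 2) + 1) / 2 := by
  have h2 : Real.sqrt 2 ≠ 0 := ne_of_gt (Real.sqrt_pos.mpr (by norm_num))
  have hsub : ∫ x in (0:ℝ)..z, (1 / Real.sqrt (2 * Real.pi)) * Real.exp (-x ^ 2 / 2)
      = (1 / Real.sqrt (2 * Real.pi)) * (Real.sqrt 2 * ∫ t in (0:ℝ)..(z / Real.sqrt 2),
          Real.exp (-t ^ 2)) := by
    rw [intervalIntegral.integral_const_mul]
    congr 1
    have key := intervalIntegral.integral_comp_div (a := 0) (b := z)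
      (f := fun t : ℝ => Real.exp (-t ^ 2)) h2
    simp only [zero_div, smul_eq_mul] at key
    rw [← key]
    congr 1; funext x
    congr 1
    rw [div_pow, Real.sq_sqrt (by norm_num : (0:ℝ) ≤ 2)]
    ring
  rw [stdNormalCdf_eq z, stdNormalCdf_zero, hsub]
  unfold erf
  have hπ : Real.sqrt Real.pi ≠ 0 := ne_of_gt (Real.sqrt_pos.mpr Real.pi_pos)
  have h2π : Real.sqrt (2 * Real.pi) = Real.sqrt 2 * Real.sqrt Real.pi :=
    Real.sqrt_mul (by norm_num) _
  rw [h2π]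
  field_simp
  ring

/-- Delta of the barrier-pricing parameter `ℬ`. -/
theorem delta_B (K B T σ rd rf φ : ℝ) (hK : 0 < K) (hB : 0 < B) (hT : 0 < T)
    (hσ : 0 < σ) (hφ : φ = 1 ∨ φ = -1) (S : ℝ) (hS : 0 < S) :
    HasDerivAt (fun s : ℝ =>
        φ * (s * Real.exp (-rf * T) *
            stdNormalCdf (φ * (Real.log (s / B) / (σ * Real.sqrt T) +
              (1 + (rd - rf - σ ^ 2 / 2) / σ ^ 2) * (σ * Real.sqrt T))) -
          K * Real.exp (-rd * T) *
            stdNormalCdf (φ * (Real.log (s / B) / (σ * Real.sqrt T) +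
              (1 + (rd - rf - σ ^ 2 / 2) / σ ^ 2) * (σ * Real.sqrt T) - σ * Real.sqrt T))))
      (φ * (1 / 2 * Real.exp (-rf * T) *
          (erf (φ * (2 * Real.log (S / B) + T * (2 * rd - 2 * rf + σ ^ 2)) /
              (2 * Real.sqrt 2 * σ * Real.sqrt T)) + 1) -
        K * φ / (Real.sqrt (2 * Real.pi) * σ * S * Real.sqrt T) *
          Real.exp (-(T * (-2 * rd + 2 * rf + σ ^ 2) - 2 * Real.log (S / B)) ^ 2 /
              (8 * σ ^ 2 * T) - rd * T) +
        φ / (Real.sqrt (2 * Real.pi) * σ * Real.sqrt T) *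
          Real.exp (-(2 * Real.log (S / B) + T * (2 * rd - 2 * rf + σ ^ 2)) ^ 2 /
              (8 * σ ^ 2 * T) - rf * T))) S := by
  have hS' : S ≠ 0 := ne_of_gt hS
  have hB' : B ≠ 0 := ne_of_gt hB
  have hσ' : σ ≠ 0 := ne_of_gt hσ
  set q := Real.sqrt T with hq
  have hq0 : 0 < q := Real.sqrt_pos.mpr hT
  have hq' : q ≠ 0 := ne_of_gt hq0
  have hT2 : q ^ 2 = T := Real.sq_sqrt hT.le
  have hφ2 : φ ^ 2 = 1 := by rcases hφ with h | h <;> rw [h] <;> norm_num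
  set c := (1 + (rd - rf - σ ^ 2 / 2) / σ ^ 2) * (σ * q) with hc
  set x2 := Real.log (S / B) / (σ * q) + c with hx2v
  have h2π : Real.sqrt (2 * Real.pi) ≠ 0 :=
    ne_of_gt (Real.sqrt_pos.mpr (by positivity))
  have hr2 : Real.sqrt 2 ≠ 0 := ne_of_gt (Real.sqrt_pos.mpr (by norm_num))
  have hlog : HasDerivAt (fun s : ℝ => Real.log (s / B)) (1 / S) S := by
    have h1 : HasDerivAt (fun s : ℝ => s / B) (1 / B) S := by
      simpa using (hasDerivAt_id S).div_const B
    have h2 := Real.hasDerivAt_log (show S / B ≠ 0 by positivity)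
    have h3 := h2.comp S h1
    refine h3.congr_deriv ?_
    field_simp
  have hx2 : HasDerivAt (fun s : ℝ => Real.log (s / B) / (σ * q) + c)
      (1 / (S * (σ * q))) S := by
    have h := (hlog.div_const (σ * q)).add_const c
    refine h.congr_deriv ?_
    field_simp
  have hy2 : HasDerivAt (fun s : ℝ => Real.log (s / B) / (σ * q) + c - σ * q)
      (1 / (S * (σ * q))) S := hx2.sub_const _
  have hN1 : HasDerivAt (fun s : ℝ => stdNormalCdf (φ * (Real.log (s / B) / (σ * q) + c)))
      (1 / Real.sqrt (2 * Real.pi) * Real.exp (-(φ * x2) ^ 2 / 2) * (φ * (1 / (S * (σ * q))))) S :=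
    by have := (stdNormalCdf_hasDeriv (φ * x2)).comp S (hx2.const_mul φ); exact this
  have hN2 : HasDerivAt
      (fun s : ℝ => stdNormalCdf (φ * (Real.log (s / B) / (σ * q) + c - σ * q)))
      (1 / Real.sqrt (2 * Real.pi) * Real.exp (-(φ * (x2 - σ * q)) ^ 2 / 2) *
        (φ * (1 / (S * (σ * q))))) S :=
    by have := (stdNormalCdf_hasDeriv (φ * (x2 - σ * q))).comp S (hy2.const_mul φ); exact this
  have hD1 : HasDerivAt
      (fun s : ℝ => s * Real.exp (-rf * T) *
        stdNormalCdf (φ * (Real.log (s / B) / (σ * q) + c)))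
      (1 * Real.exp (-rf * T) * stdNormalCdf (φ * x2) + S * Real.exp (-rf * T) *
        (1 / Real.sqrt (2 * Real.pi) * Real.exp (-(φ * x2) ^ 2 / 2) *
          (φ * (1 / (S * (σ * q)))))) S :=
    ((hasDerivAt_id S).mul_const (Real.exp (-rf * T))).mul hN1
  have hD2 : HasDerivAt
      (fun s : ℝ => K * Real.exp (-rd * T) *
        stdNormalCdf (φ * (Real.log (s / B) / (σ * q) + c - σ * q)))
      (K * Real.exp (-rd * T) *
        (1 / Real.sqrt (2 * Real.pi) * Real.exp (-(φ * (x2 - σ * q)) ^ 2 / 2) *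
          (φ * (1 / (S * (σ * q)))))) S :=
    hN2.const_mul _
  have hD := (hD1.sub hD2).const_mul φ
  refine hD.congr_deriv ?_
  symm
  rw [stdNormalCdf_erf (φ * x2)]
  have hA : φ * (2 * Real.log (S / B) + T * (2 * rd - 2 * rf + σ ^ 2)) /
      (2 * Real.sqrt 2 * σ * q) = φ * x2 / Real.sqrt 2 := by
    rw [hx2v, hc, ← hT2]
    field_simp
    ring
  rw [hA]
  have hE1 : Real.exp (-(T * (-2 * rd + 2 * rf + σ ^ 2) - 2 * Real.log (S / B)) ^ 2 /
        (8 * σ ^ 2 * T) - rd * T)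
      = Real.exp (-rd * T) * Real.exp (-(φ * (x2 - σ * q)) ^ 2 / 2) := by
    rw [← Real.exp_add]
    congr 1
    rw [hx2v, hc, mul_pow, hφ2, one_mul, ← hT2]
    field_simp
    ring
  have hE2 : Real.exp (-(2 * Real.log (S / B) + T * (2 * rd - 2 * rf + σ ^ 2)) ^ 2 /
        (8 * σ ^ 2 * T) - rf * T)
      = Real.exp (-rf * T) * Real.exp (-(φ * x2) ^ 2 / 2) := by
    rw [← Real.exp_add]
    congr 1
    rw [hx2v, hc, mul_pow, hφ2, one_mul, ← hT2]
    field_simp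
    ring
  rw [hE1, hE2]
  field_simp
  ring
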